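/- Let d > 0 and let β : [0,∞) → ℝ be a continuous nonincreasing function with 0 ≤ β(x) < 1 for all x ≥ 0 and d·β(l)² = 1 - f(l) for every natural number l. For an integer T ≥ 1 set c = ∫_0^{T-1} β(x)/(1-β(x)) dx + β(0)/(1-β(0)). If c ≤ k·(1-γ)/γ for an integer k ≥ 1, then w̄(k,T) ≤ (1-γ)⁻¹ · T · e^{c/(1-γ)} · [ (1-γ)·p·d/γ ]^k. -/

import Mathlib

set_option maxHeartbeats 1000000


/-- **Upper bound on `w̄` via the integral of the learning rate (Theorem 4, second statement).**
Let `β : [0,∞) → ℝ` be continuous nonincreasing with `0 ≤ β x < 1` and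
`d·β(l)² = 1 - f l` on naturals, and set
`c = ∫_0^{T-1} β(x)/(1-β(x)) dx + β(0)/(1-β(0))`.  If `c ≤ k(1-γ)/γ` then
`w̄(k,T) ≤ (1-γ)⁻¹ · T · e^{c/(1-γ)} · ((1-γ)pd/γ)^k`. -/
theorem selfloop_free_integral_upper_bound
    (p h γ : ℝ) (hp : 0 < p) (hh : 0 ≤ h) (hph : p + h ≤ 1)
    (hγ0 : 0 < γ) (hγ1 : γ < 1)
    (f : ℕ → ℝ) (hf0 : ∀ l, 0 ≤ f l) (hf1 : ∀ l, f l ≤ 1)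
    (α : ℕ → ℝ)
    (hα : ∀ l, α l = p * (1 - f l) / (γ + (1 - γ) * (p + h) * (1 - f l)))
    (pr : ℕ → ℕ → ℝ)
    (hpr00 : pr 0 0 = 1)
    (hpr0 : ∀ i, pr 0 (i + 1) = (1 - α i) * pr 0 i)
    (hprj0 : ∀ j, pr (j + 1) 0 = ((1 - γ) * α 0) ^ (j + 1))
    (hprrec : ∀ j i, pr (j + 1) (i + 1) =
      (1 - γ) * α (i + 1) * pr j (i + 1) + γ * α i * pr j i + (1 - α i) * pr (j + 1) i)
    (d : ℝ) (hd : 0 < d)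
    (β : ℝ → ℝ)
    (hβcont : ContinuousOn β (Set.Ici (0 : ℝ)))
    (hβmono : AntitoneOn β (Set.Ici (0 : ℝ)))
    (hβ0 : ∀ x : ℝ, 0 ≤ x → 0 ≤ β x)
    (hβ1 : ∀ x : ℝ, 0 ≤ x → β x < 1)
    (hβf : ∀ l : ℕ, d * (β l) ^ 2 = 1 - f l)
    (T : ℕ) (hT : 1 ≤ T)
    (c : ℝ)
    (hc : c = (∫ x in (0 : ℝ)..((T : ℝ) - 1), β x / (1 - β x)) + β 0 / (1 - β 0))
    (k : ℕ) (hk : 1 ≤ k)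
    (hck : c ≤ (k : ℝ) * (1 - γ) / γ) :
    ∑ i ∈ Finset.range T, α i * pr (k - 1) i ≤
      (1 - γ)⁻¹ * (T : ℝ) * Real.exp (c / (1 - γ)) * ((1 - γ) * p * d / γ) ^ k := by
  have h1γ : (0:ℝ) < 1 - γ := by linarith
  set A : ℝ := (1 - γ) * p * d / γ with hAdef
  have hA0 : 0 ≤ A := by positivity
  -- basic facts about β on naturals
  have hbn0 : ∀ l : ℕ, 0 ≤ β l := fun l => hβ0 l (Nat.cast_nonneg l)
  have hbn1 : ∀ l : ℕ, β l < 1 := fun l => hβ1 l (Nat.cast_nonneg l)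
  have hb2 : ∀ l : ℕ, 0 < 1 - (β l) ^ 2 := by
    intro l; nlinarith [hbn0 l, hbn1 l]
  -- basic facts about α
  have hDpos : ∀ l : ℕ, 0 < γ + (1 - γ) * (p + h) * (1 - f l) := by
    intro l
    have h1 : 0 ≤ (1 - γ) * (p + h) * (1 - f l) := by
      apply mul_nonneg (mul_nonneg h1γ.le (by linarith)) (by linarith [hf1 l])
    linarith
  have hα0 : ∀ l, 0 ≤ α l := by
    intro l; rw [hα l]
    exact div_nonneg (mul_nonneg hp.le (by linarith [hf1 l])) (hDpos l).le
  have hα1 : ∀ l, α l ≤ 1 := by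
    intro l; rw [hα l, div_le_one (hDpos l)]
    have hu0 : 0 ≤ 1 - f l := by linarith [hf1 l]
    have hu1 : 1 - f l ≤ 1 := by linarith [hf0 l]
    nlinarith [mul_nonneg hh hu0, mul_le_one₀ hph hu0 hu1]
  have hαle : ∀ l : ℕ, α l ≤ p * d * (β l) ^ 2 / γ := by
    intro l
    have hnum : p * (1 - f l) = p * d * (β l) ^ 2 := by rw [← hβf l]; ring
    rw [hα l, hnum]
    rw [div_le_div_iff₀ (hDpos l) hγ0]
    have h1 : 0 ≤ (1 - γ) * (p + h) * (1 - f l) := by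
      apply mul_nonneg (mul_nonneg h1γ.le (by linarith)) (by linarith [hf1 l])
    nlinarith [mul_nonneg (mul_nonneg hp.le hd.le) (sq_nonneg (β l))]
  have hAβ : ∀ l : ℕ, (1 - γ) * α l ≤ A * (β l) ^ 2 := by
    intro l
    have : A * (β l) ^ 2 = (1 - γ) * (p * d * (β l) ^ 2 / γ) := by
      rw [hAdef]; field_simp
    rw [this]
    exact mul_le_mul_of_nonneg_left (hαle l) h1γ.le
  have hγβ : ∀ l : ℕ, γ * α l ≤ A * (γ / (1 - γ)) * (β l) ^ 2 := by
    intro l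
    have h1 : A * (γ / (1 - γ)) * (β l) ^ 2 = γ * (p * d * (β l) ^ 2 / γ) := by
      rw [hAdef]; field_simp
    rw [h1]
    exact mul_le_mul_of_nonneg_left (hαle l) hγ0.le
  -- the potential E
  set ρ : ℕ → ℝ := fun l => (1 + γ * (β l) ^ 2 / (1 - γ)) / (1 - (β l) ^ 2) with hρdef
  set E : ℕ → ℝ := fun i => ∏ l ∈ Finset.range i, ρ l with hEdef
  have hρ1 : ∀ l, 1 ≤ ρ l := by
    intro l
    rw [hρdef]
    rw [le_div_iff₀ (hb2 l)]
    have : 0 ≤ γ * (β l) ^ 2 / (1 - γ) := by positivity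
    nlinarith [sq_nonneg (β l)]
  have hE0 : E 0 = 1 := by simp [hEdef]
  have hEstep : ∀ i, E (i + 1) = E i * ρ i := fun i => Finset.prod_range_succ ρ i
  have hEpos : ∀ i, 0 < E i := by
    intro i
    induction i with
    | zero => rw [hE0]; norm_num
    | succ i ih => rw [hEstep i]; exact mul_pos ih (lt_of_lt_of_le one_pos (hρ1 i))
  have hE1 : ∀ i, 1 ≤ E i := by
    intro i
    induction i with
    | zero => rw [hE0]
    | succ i ih =>
      rw [hEstep i]
      nlinarith [hρ1 i, hEpos i]
  have hEmono : Monotone E := by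
    apply monotone_nat_of_le_succ
    intro i
    rw [hEstep i]
    nlinarith [hρ1 i, hEpos i]
  have hiden : ∀ i : ℕ, (1 - (β i) ^ 2) * ρ i = 1 + γ * (β i) ^ 2 / (1 - γ) := by
    intro i
    rw [hρdef]
    field_simp [(hb2 i).ne', h1γ.ne']
  clear_value ρ E
  -- step inequality for E
  have hkey2 : ∀ i : ℕ, (β (i+1:ℕ)) ^ 2 * E (i + 1) + γ / (1 - γ) * (β i) ^ 2 * E i + E i
      ≤ E (i + 1) := by
    intro i
    have hbmono : β (i+1:ℕ) ≤ β i := by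
      apply hβmono (Set.mem_Ici.2 (Nat.cast_nonneg i)) (Set.mem_Ici.2 (Nat.cast_nonneg (i+1)))
      push_cast; linarith
    have h1 : γ / (1 - γ) * (β i) ^ 2 * E i + E i = (1 - (β i) ^ 2) * E (i + 1) := by
      rw [hEstep i]; linear_combination (-(E i)) * hiden i
    have h2 : (1 - (β i) ^ 2) * E (i + 1) ≤ (1 - (β (i+1:ℕ)) ^ 2) * E (i + 1) := by
      apply mul_le_mul_of_nonneg_right _ (hEpos (i+1)).le
      nlinarith [hbn0 (i+1), hbn0 i]
    nlinarith [h1, h2]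
  -- main double induction
  have key : ∀ j i, 0 ≤ pr j i ∧ pr j i ≤ A ^ j * E i := by
    intro j
    induction j with
    | zero =>
      intro i
      induction i with
      | zero =>
        rw [hpr00, pow_zero, hE0]; norm_num
      | succ i ih =>
        rw [hpr0 i]
        constructor
        · exact mul_nonneg (by linarith [hα1 i]) ih.1
        · calc (1 - α i) * pr 0 i ≤ 1 * (A ^ 0 * E i) :=
                mul_le_mul (by linarith [hα0 i]) ih.2 ih.1 one_pos.le
            _ = E i := by rw [pow_zero]; ring
            _ ≤ E (i + 1) := hEmono (Nat.le_succ i)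
            _ = A ^ 0 * E (i + 1) := by rw [pow_zero]; ring
    | succ j ihj =>
      intro i
      induction i with
      | zero =>
        rw [hprj0 j]
        have hbase0 : 0 ≤ (1 - γ) * α 0 := mul_nonneg h1γ.le (hα0 0)
        constructor
        · exact pow_nonneg hbase0 (j + 1)
        · have hbA : (1 - γ) * α 0 ≤ A := by
            have h1 := hAβ 0
            have h2 : 0 ≤ A * (1 - (β ((0:ℕ):ℝ)) ^ 2) := mul_nonneg hA0 (hb2 0).le
            nlinarith [h1, h2]
          calc ((1 - γ) * α 0) ^ (j + 1) ≤ A ^ (j + 1) :=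
                pow_le_pow_left₀ hbase0 hbA (j + 1)
            _ = A ^ (j + 1) * E 0 := by rw [hE0]; ring
      | succ i ihi =>
        rw [hprrec j i]
        have hc1 : 0 ≤ (1 - γ) * α (i + 1) := mul_nonneg h1γ.le (hα0 (i+1))
        have hc2 : 0 ≤ γ * α i := mul_nonneg hγ0.le (hα0 i)
        have hc3 : 0 ≤ 1 - α i := by linarith [hα1 i]
        constructor
        · exact add_nonneg (add_nonneg (mul_nonneg hc1 (ihj (i+1)).1)
            (mul_nonneg hc2 (ihj i).1)) (mul_nonneg hc3 ihi.1)
        · have hnn1 : 0 ≤ A * (β (i+1:ℕ)) ^ 2 := mul_nonneg hA0 (sq_nonneg _)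
          have hnn2 : 0 ≤ A * (γ / (1 - γ)) * (β i) ^ 2 := by
            apply mul_nonneg (mul_nonneg hA0 _) (sq_nonneg _)
            positivity
          calc (1 - γ) * α (i + 1) * pr j (i + 1) + γ * α i * pr j i
                + (1 - α i) * pr (j + 1) i
              ≤ (A * (β (i+1:ℕ)) ^ 2) * (A ^ j * E (i + 1))
                + (A * (γ / (1 - γ)) * (β i) ^ 2) * (A ^ j * E i)
                + 1 * (A ^ (j + 1) * E i) := by
                  apply add_le_add (add_le_add _ _) _
                  · exact mul_le_mul (hAβ (i+1)) (ihj (i+1)).2 (ihj (i+1)).1 hnn1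
                  · exact mul_le_mul (hγβ i) (ihj i).2 (ihj i).1 hnn2
                  · exact mul_le_mul (by linarith [hα0 i]) ihi.2 ihi.1 one_pos.le
            _ = A ^ j * A * ((β (i+1:ℕ)) ^ 2 * E (i + 1)
                  + γ / (1 - γ) * (β i) ^ 2 * E i + E i) := by ring
            _ ≤ A ^ j * A * E (i + 1) :=
                  mul_le_mul_of_nonneg_left (hkey2 i) (mul_nonneg (pow_nonneg hA0 j) hA0)
            _ = A ^ (j + 1) * E (i + 1) := by ring
  -- sum versus integral
  have hgne : ∀ x : ℝ, 0 ≤ x → (1 : ℝ) - β x ≠ 0 := by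
    intro x hx
    have := hβ1 x hx
    intro hcontra; linarith [sub_eq_zero.1 hcontra]
  have hgpos : ∀ x : ℝ, 0 ≤ x → 0 < 1 - β x := fun x hx => by linarith [hβ1 x hx]
  have hgnonneg : ∀ x : ℝ, 0 ≤ x → 0 ≤ β x / (1 - β x) := by
    intro x hx
    exact div_nonneg (hβ0 x hx) (hgpos x hx).le
  have hganti : AntitoneOn (fun x => β x / (1 - β x)) (Set.Ici (0:ℝ)) := by
    intro x hx y hy hxy
    simp only
    rw [div_le_div_iff₀ (hgpos y hy) (hgpos x hx)]
    have h1 := hβmono hx hy hxy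
    nlinarith [hβ0 x hx, hβ0 y hy]
  have hgcont : ContinuousOn (fun x => β x / (1 - β x)) (Set.Ici (0:ℝ)) := by
    exact hβcont.div (continuousOn_const.sub hβcont) (fun x hx => hgne x hx)
  have hsum : (∑ l ∈ Finset.range (T - 1), β l / (1 - β l)) ≤ c := by
    obtain ⟨m, rfl⟩ : ∃ m, T = m + 1 := ⟨T - 1, by omega⟩
    rw [hc]
    have hTc : ((m + 1 : ℕ) : ℝ) - 1 = (m : ℝ) := by push_cast; ring
    rw [hTc]
    simp only [Nat.add_sub_cancel]
    have hg0 : 0 ≤ β 0 / (1 - β 0) := hgnonneg 0 le_rfl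
    rcases Nat.eq_zero_or_pos m with rfl | hmpos
    · simp only [Finset.range_zero, Finset.sum_empty, Nat.cast_zero,
        intervalIntegral.integral_same]
      linarith
    · obtain ⟨n, rfl⟩ : ∃ n, m = n + 1 := ⟨m - 1, by omega⟩
      rw [Finset.sum_range_succ']
      have hint1 : (∑ l ∈ Finset.range n, β (↑(l + 1) : ℝ) / (1 - β (↑(l + 1) : ℝ)))
          ≤ ∫ x in (0:ℝ)..(n:ℝ), β x / (1 - β x) := by
        have hmono : AntitoneOn (fun x => β x / (1 - β x)) (Set.Icc (0:ℝ) (0 + (n:ℕ))) := by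
          apply hganti.mono
          intro x hx
          exact Set.mem_Ici.2 hx.1
        have h := hmono.sum_le_integral
        simpa using h
      have hIab : IntervalIntegrable (fun x => β x / (1 - β x)) MeasureTheory.volume
          0 (n:ℝ) := by
        apply ContinuousOn.intervalIntegrable
        apply hgcont.mono
        rw [Set.uIcc_of_le (by positivity)]
        intro x hx; exact Set.mem_Ici.2 hx.1
      have hIbc : IntervalIntegrable (fun x => β x / (1 - β x)) MeasureTheory.volume
          (n:ℝ) ((n:ℝ) + 1) := by
        apply ContinuousOn.intervalIntegrable
        apply hgcont.mono
        rw [Set.uIcc_of_le (by linarith)]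
        intro x hx
        exact Set.mem_Ici.2 (le_trans (Nat.cast_nonneg n) hx.1)
      have hadd := intervalIntegral.integral_add_adjacent_intervals hIab hIbc
      have hlast : 0 ≤ ∫ x in (n:ℝ)..((n:ℝ) + 1), β x / (1 - β x) := by
        apply intervalIntegral.integral_nonneg (by linarith)
        intro x hx
        exact hgnonneg x (le_trans (Nat.cast_nonneg n) hx.1)
      have hcast2 : ((n + 1 : ℕ) : ℝ) = (n:ℝ) + 1 := by push_cast; ring
      rw [hcast2]
      have hz : β ((0:ℕ) : ℝ) / (1 - β ((0:ℕ) : ℝ)) = β 0 / (1 - β 0) := by norm_num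
      rw [hz]
      linarith
  -- E (T-1) ≤ exp (c / (1-γ))
  have hρexp : ∀ l : ℕ, ρ l ≤ Real.exp ((β l / (1 - β l)) / (1 - γ)) := by
    intro l
    have hb0 := hbn0 l
    have hb1 := hbn1 l
    have hbden : (0:ℝ) < 1 - β l := by linarith
    have h1 : ρ l ≤ 1 + (β l / (1 - β l)) / (1 - γ) := by
      have hkey : (1 + (β (l:ℝ) / (1 - β l)) / (1 - γ)) * (1 - (β l) ^ 2)
          - (1 + γ * (β l) ^ 2 / (1 - γ)) = β l / (1 - γ) := by
        field_simp
        ring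
      nlinarith [hiden l, hkey, hb2 l, div_nonneg hb0 h1γ.le]
    have := Real.add_one_le_exp ((β l / (1 - β l)) / (1 - γ))
    linarith
  have hEexp : E (T - 1) ≤ Real.exp (c / (1 - γ)) := by
    calc E (T - 1) ≤ ∏ l ∈ Finset.range (T - 1), Real.exp ((β l / (1 - β l)) / (1 - γ)) := by
          rw [hEdef]
          apply Finset.prod_le_prod (fun l _ => by linarith [hρ1 l]) (fun l _ => hρexp l)
      _ = Real.exp (∑ l ∈ Finset.range (T - 1), (β l / (1 - β l)) / (1 - γ)) :=
          (Real.exp_sum _ _).symm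
      _ ≤ Real.exp (c / (1 - γ)) := by
          apply Real.exp_le_exp.2
          rw [← Finset.sum_div]
          exact (div_le_div_iff_of_pos_right h1γ).2 hsum
  -- final assembly
  have hαA : ∀ l : ℕ, α l ≤ A / (1 - γ) := by
    intro l
    have h1 : A / (1 - γ) = p * d / γ := by rw [hAdef]; field_simp
    calc α l ≤ p * d * (β l) ^ 2 / γ := hαle l
      _ ≤ p * d / γ := by
          rw [div_le_div_iff₀ hγ0 hγ0]
          nlinarith [hb2 l, mul_pos (mul_pos hp hd) hγ0]
      _ = A / (1 - γ) := h1.symm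
  have hperi : ∀ i ∈ Finset.range T, α i * pr (k - 1) i
      ≤ A / (1 - γ) * (A ^ (k - 1) * E (T - 1)) := by
    intro i hi
    have hiT : i ≤ T - 1 := by
      have := Finset.mem_range.1 hi; omega
    have h2 : 0 ≤ A ^ (k-1) * E i := mul_nonneg (pow_nonneg hA0 _) (hEpos i).le
    calc α i * pr (k - 1) i ≤ α i * (A ^ (k - 1) * E i) :=
          mul_le_mul_of_nonneg_left (key (k-1) i).2 (hα0 i)
      _ ≤ A / (1 - γ) * (A ^ (k - 1) * E i) :=
          mul_le_mul_of_nonneg_right (hαA i) h2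
      _ ≤ A / (1 - γ) * (A ^ (k - 1) * E (T - 1)) := by
          apply mul_le_mul_of_nonneg_left _ (by positivity)
          exact mul_le_mul_of_nonneg_left (hEmono hiT) (pow_nonneg hA0 _)
  have hApow : A ^ (k - 1) * A = A ^ k := by
    rw [← pow_succ, Nat.sub_add_cancel hk]
  calc ∑ i ∈ Finset.range T, α i * pr (k - 1) i
      ≤ ∑ _i ∈ Finset.range T, A / (1 - γ) * (A ^ (k - 1) * E (T - 1)) :=
        Finset.sum_le_sum hperi
    _ = (T : ℝ) * (A / (1 - γ) * (A ^ (k - 1) * E (T - 1))) := by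
        rw [Finset.sum_const, Finset.card_range, nsmul_eq_mul]
    _ = (1 - γ)⁻¹ * (T : ℝ) * E (T - 1) * (A ^ (k - 1) * A) := by ring
    _ = (1 - γ)⁻¹ * (T : ℝ) * E (T - 1) * A ^ k := by rw [hApow]
    _ ≤ (1 - γ)⁻¹ * (T : ℝ) * Real.exp (c / (1 - γ)) * A ^ k := by
        apply mul_le_mul_of_nonneg_right _ (pow_nonneg hA0 k)
        apply mul_le_mul_of_nonneg_left hEexp
        positivity
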